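/- arXiv:1603.07953 — 5 statements merged into one kernel-verified Lean document; each statement's English description precedes it below -/
import Mathlib

section
/- For every real exponent p with 2 ≤ p < ∞, there exists a constant C > 0 such that for all real numbers a, b: | |a+b|^p − |a|^p − p|a|^{p−2} a b − |b|^p | ≤ C( |a|^{p−2} |b|^2 + |a| · |b|^{p−1} ). -/
open Real

lemma rpow_mvt {r : ℝ} (hr : 1 ≤ r) {s t : ℝ} (hs : 0 ≤ s) (ht : 0 ≤ t) :
    |s ^ r - t ^ r| ≤ r * max s t ^ (r - 1) * |s - t| := by
  set M := max s t with hM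
  have hM0 : 0 ≤ M := le_trans hs (le_max_left _ _)
  have key := Convex.norm_image_sub_le_of_norm_hasDerivWithin_le
    (f := fun x : ℝ => x ^ r) (f' := fun x : ℝ => r * x ^ (r - 1))
    (C := r * M ^ (r - 1)) (s := Set.Icc 0 M)
    (fun x _ => (Real.hasDerivAt_rpow_const (Or.inr hr)).hasDerivWithinAt)
    (fun x hx => by
      have hx0 : (0:ℝ) ≤ x := hx.1
      rw [Real.norm_eq_abs, abs_of_nonneg
        (mul_nonneg (by linarith) (Real.rpow_nonneg hx0 _))]
      have : x ^ (r-1) ≤ M ^ (r-1) := Real.rpow_le_rpow hx0 hx.2 (by linarith)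
      nlinarith)
    (convex_Icc 0 M) ⟨ht, le_max_right _ _⟩ ⟨hs, le_max_left _ _⟩
  simpa [Real.norm_eq_abs] using key

lemma phi_eq {q : ℝ} (hq : 0 ≤ q) (x : ℝ) (hx : 0 ≤ x) :
    |x| ^ q * x = x ^ (q + 1) := by
  rcases eq_or_lt_of_le hx with h | h
  · simp [← h, Real.zero_rpow (by linarith : q + 1 ≠ 0)]
  · rw [abs_of_pos h, ← Real.rpow_add_one h.ne' q]

lemma phi_lip_nonneg {q : ℝ} (hq : 0 ≤ q) {x y : ℝ} (hx : 0 ≤ x) (hy : 0 ≤ y) :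
    |(|x| ^ q * x - |y| ^ q * y)| ≤ (q + 1) * max |x| |y| ^ q * |x - y| := by
  rw [phi_eq hq x hx, phi_eq hq y hy, abs_of_nonneg hx, abs_of_nonneg hy]
  have := rpow_mvt (r := q + 1) (by linarith) hx hy
  simpa using this

lemma phi_lip_mixed {q : ℝ} (hq : 0 ≤ q) {x y : ℝ} (hx : 0 ≤ x) (hy : y < 0) :
    |(|x| ^ q * x - |y| ^ q * y)| ≤ (q + 1) * max |x| |y| ^ q * |x - y| := by
  rw [abs_of_nonneg hx, abs_of_neg hy,
    abs_of_nonneg (by linarith : (0:ℝ) ≤ x - y)]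
  set u := -y with hu
  have hu0 : 0 < u := by simp [hu]; linarith
  have hxy : y = -u := by rw [hu]; ring
  rw [hxy]
  have hM0 : (0:ℝ) ≤ max x u := le_trans hx (le_max_left _ _)
  have h1 : x ^ q * x ≤ max x u ^ q * x :=
    mul_le_mul_of_nonneg_right (Real.rpow_le_rpow hx (le_max_left _ _) hq) hx
  have h2 : u ^ q * u ≤ max x u ^ q * u :=
    mul_le_mul_of_nonneg_right (Real.rpow_le_rpow hu0.le (le_max_right _ _) hq) hu0.le
  have hx1 : 0 ≤ x ^ q * x := mul_nonneg (Real.rpow_nonneg hx _) hx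
  have hx2 : 0 ≤ u ^ q * u := mul_nonneg (Real.rpow_nonneg hu0.le _) hu0.le
  have hM : 0 ≤ max x u ^ q := Real.rpow_nonneg hM0 _
  rw [abs_of_nonneg (by nlinarith : (0:ℝ) ≤ x ^ q * x - u ^ q * -u)]
  nlinarith [mul_nonneg hM (by linarith : (0:ℝ) ≤ x + u)]

lemma phi_lip {q : ℝ} (hq : 0 ≤ q) (x y : ℝ) :
    |(|x| ^ q * x - |y| ^ q * y)| ≤ (q + 1) * max |x| |y| ^ q * |x - y| := by
  rcases le_or_gt 0 x with hx | hx <;> rcases le_or_gt 0 y with hy | hy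
  · exact phi_lip_nonneg hq hx hy
  · exact phi_lip_mixed hq hx hy
  · have h := phi_lip_mixed hq hy hx
    rw [max_comm] at h
    rwa [abs_sub_comm (|x| ^ q * x), abs_sub_comm x y]
  · have h := phi_lip_nonneg hq (x := -x) (y := -y) (by linarith) (by linarith)
    simp only [abs_neg] at h
    have e1 : |x| ^ q * -x - |y| ^ q * -y = -(|x| ^ q * x - |y| ^ q * y) := by ring
    have e2 : -x - -y = -(x - y) := by ring
    rwa [e1, e2, abs_neg, abs_neg] at h

lemma tri3 (X Y Z : ℝ) : |X - Y - Z| ≤ |X| + |Y| + |Z| := by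
  have h1 := abs_add_le (X - Y) (-Z)
  have h2 := abs_add_le X (-Y)
  simp only [abs_neg, ← sub_eq_add_neg] at h1 h2
  linarith

set_option maxHeartbeats 1000000 in
theorem pointwise_second_order_power_estimate (p : ℝ) (hp2 : 2 ≤ p) :
    ∃ C : ℝ, 0 < C ∧ ∀ a b : ℝ,
      |(|a + b| ^ p - |a| ^ p - p * |a| ^ (p - 2) * a * b - |b| ^ p)| ≤
        C * (|a| ^ (p - 2) * |b| ^ (2 : ℝ) + |a| * |b| ^ (p - 1)) := by
  have hp1 : (1:ℝ) < p := by linarith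
  have hp0 : (0:ℝ) < p := by linarith
  have h2p : (0:ℝ) < (2:ℝ) ^ p := Real.rpow_pos_of_pos two_pos p
  refine ⟨(p * p + p + 1) * 2 ^ p + p + 1, by positivity, fun a b => ?_⟩
  set C := (p * p + p + 1) * (2:ℝ) ^ p + p + 1 with hC
  have hA1 : (0:ℝ) ≤ |a| ^ (p - 2) * |b| ^ (2:ℝ) :=
    mul_nonneg (Real.rpow_nonneg (abs_nonneg a) _) (Real.rpow_nonneg (abs_nonneg b) _)
  have hA2 : (0:ℝ) ≤ |a| * |b| ^ (p - 1) :=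
    mul_nonneg (abs_nonneg a) (Real.rpow_nonneg (abs_nonneg b) _)
  have hC0 : (0:ℝ) < C := by positivity
  set A1 := |a| ^ (p - 2) * |b| ^ (2:ℝ) with hA1d
  set A2 := |a| * |b| ^ (p - 1) with hA2d
  clear_value C A1 A2
  rcases le_or_gt |a| |b| with hab | hab
  · -- Case |a| ≤ |b|
    have t1 := rpow_mvt (r := p) hp1.le (abs_nonneg (a + b)) (abs_nonneg b)
    have hmax : max |a + b| |b| ≤ 2 * |b| := by
      refine max_le ?_ (by linarith [abs_nonneg b])
      calc |a + b| ≤ |a| + |b| := abs_add_le a b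
        _ ≤ 2 * |b| := by linarith
    have hd : |(|a + b| - |b|)| ≤ |a| := by
      simpa using abs_abs_sub_abs_le_abs_sub (a + b) b
    have hmaxp : max |a + b| |b| ^ (p - 1) ≤ 2 ^ p * |b| ^ (p - 1) := by
      calc max |a + b| |b| ^ (p - 1) ≤ (2 * |b|) ^ (p - 1) :=
            Real.rpow_le_rpow (le_trans (abs_nonneg b) (le_max_right _ _)) hmax (by linarith)
        _ = 2 ^ (p - 1) * |b| ^ (p - 1) := Real.mul_rpow (by norm_num) (abs_nonneg b)
        _ ≤ 2 ^ p * |b| ^ (p - 1) :=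
            mul_le_mul_of_nonneg_right
              (Real.rpow_le_rpow_of_exponent_le one_le_two (by linarith))
              (Real.rpow_nonneg (abs_nonneg b) _)
    have T1 : |(|a + b| ^ p - |b| ^ p)| ≤ p * 2 ^ p * A2 := by
      calc |(|a + b| ^ p - |b| ^ p)|
          ≤ p * max |a + b| |b| ^ (p - 1) * |(|a + b| - |b|)| := t1
        _ ≤ p * (2 ^ p * |b| ^ (p - 1)) * |a| :=
            mul_le_mul (mul_le_mul_of_nonneg_left hmaxp hp0.le) hd
              (abs_nonneg _) (by positivity)
        _ = p * 2 ^ p * A2 := by rw [hA2d]; ring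
    have hsplit : |a| ^ p = |a| * |a| ^ (p - 1) := by
      have h := Real.rpow_add' (abs_nonneg a)
        (show (1:ℝ) + (p - 1) ≠ 0 by intro h; apply (by linarith : p ≠ 0); linarith)
      rw [show (1:ℝ) + (p - 1) = p from by ring] at h
      rw [h, Real.rpow_one]
    have T2 : |a| ^ p ≤ A2 := by
      rw [hsplit, hA2d]
      exact mul_le_mul_of_nonneg_left
        (Real.rpow_le_rpow (abs_nonneg a) hab (by linarith)) (abs_nonneg a)
    have h2 : |b| ^ (p - 2) * |b| = |b| ^ (p - 1) := by
      rcases eq_or_ne b 0 with hb | hb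
      · rw [hb]; simp [Real.zero_rpow (sub_ne_zero.2 (show p ≠ 1 by linarith))]
      · rw [show p - 1 = p - 2 + 1 from by ring, Real.rpow_add_one (abs_ne_zero.2 hb)]
    have T3 : |p * |a| ^ (p - 2) * a * b| ≤ p * A2 := by
      have e : |p * |a| ^ (p - 2) * a * b| = p * (|a| ^ (p - 2) * |a|) * |b| := by
        rw [abs_mul, abs_mul, abs_mul, abs_of_pos hp0,
          abs_of_nonneg (Real.rpow_nonneg (abs_nonneg a) _)]
        ring
      rw [e]
      have h1 : |a| ^ (p - 2) * |a| ≤ |b| ^ (p - 2) * |a| :=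
        mul_le_mul_of_nonneg_right
          (Real.rpow_le_rpow (abs_nonneg a) hab (by linarith)) (abs_nonneg a)
      calc p * (|a| ^ (p - 2) * |a|) * |b| ≤ p * (|b| ^ (p - 2) * |a|) * |b| :=
            mul_le_mul_of_nonneg_right
              (mul_le_mul_of_nonneg_left h1 hp0.le) (abs_nonneg b)
        _ = |a| * (|b| ^ (p - 2) * |b|) * p := by ring
        _ = p * A2 := by rw [h2, hA2d]; ring
    have tri := tri3 (|a + b| ^ p - |b| ^ p) (|a| ^ p) (p * |a| ^ (p - 2) * a * b)
    have e : |a + b| ^ p - |a| ^ p - p * |a| ^ (p - 2) * a * b - |b| ^ p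
        = (|a + b| ^ p - |b| ^ p) - |a| ^ p - p * |a| ^ (p - 2) * a * b := by ring
    rw [e]
    have habs : |(|a|:ℝ) ^ p| = |a| ^ p := abs_of_nonneg (Real.rpow_nonneg (abs_nonneg a) _)
    rw [habs] at tri
    have hcoef : p * 2 ^ p + 1 + p ≤ C := by
      rw [hC]
      nlinarith [mul_nonneg (show (0:ℝ) ≤ p * p + 1 by nlinarith) h2p.le]
    calc |(|a + b| ^ p - |b| ^ p) - |a| ^ p - p * |a| ^ (p - 2) * a * b|
        ≤ (p * 2 ^ p + 1 + p) * A2 := by nlinarith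
      _ ≤ C * (A1 + A2) := by
          nlinarith [mul_le_mul_of_nonneg_right hcoef hA2, mul_nonneg hC0.le hA1]
  · -- Case |b| < |a|
    have hq : (0:ℝ) ≤ p - 2 := by linarith
    set c := p * |a| ^ (p - 2) * a * b with hc
    set K := p * ((p - 1) * (2 * |a|) ^ (p - 2) * |b|) * |b| with hKd
    clear_value c K
    have hderiv : ∀ t ∈ Set.Icc (0:ℝ) 1,
        HasDerivWithinAt (fun t : ℝ => |a + b * t| ^ p - c * t)
          (p * |a + b * t| ^ (p - 2) * (a + b * t) * b - c) (Set.Icc 0 1) t := by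
      intro t _
      have h1 : HasDerivAt (fun t : ℝ => a + b * t) b t := by
        simpa using ((hasDerivAt_id t).const_mul b).const_add a
      have h2 : HasDerivAt (fun t : ℝ => |a + b * t| ^ p)
          (p * |a + b * t| ^ (p - 2) * (a + b * t) * b) t := by
        have := (hasDerivAt_abs_rpow (a + b * t) hp1).comp t h1
        exact this
      have h3 : HasDerivAt (fun t : ℝ => c * t) c t := by
        simpa using (hasDerivAt_id t).const_mul c
      exact (h2.sub h3).hasDerivWithinAt
    have hbound : ∀ t ∈ Set.Icc (0:ℝ) 1,
        ‖p * |a + b * t| ^ (p - 2) * (a + b * t) * b - c‖ ≤ K := by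
      intro t ht
      have hphi := phi_lip hq (a + b * t) a
      have habt : |a + b * t| ≤ 2 * |a| := by
        calc |a + b * t| ≤ |a| + |b * t| := abs_add_le a (b * t)
          _ ≤ 2 * |a| := by
            rw [abs_mul]
            have h5 : |b| * |t| ≤ |a| * 1 :=
              mul_le_mul hab.le (by rw [abs_of_nonneg ht.1]; exact ht.2)
                (abs_nonneg t) (abs_nonneg a)
            linarith
      have hmax2 : max |a + b * t| |a| ≤ 2 * |a| :=
        max_le habt (by linarith [abs_nonneg a])
      have hmaxp : max |a + b * t| |a| ^ (p - 2) ≤ (2 * |a|) ^ (p - 2) :=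
        Real.rpow_le_rpow (le_trans (abs_nonneg a) (le_max_right _ _)) hmax2 hq
      have hsub : |a + b * t - a| ≤ |b| := by
        rw [show a + b * t - a = b * t from by ring, abs_mul]
        have h5 : |b| * |t| ≤ |b| * 1 :=
          mul_le_mul_of_nonneg_left (by rw [abs_of_nonneg ht.1]; exact ht.2) (abs_nonneg b)
        linarith
      have hphi2 : |(|a + b * t| ^ (p - 2) * (a + b * t) - |a| ^ (p - 2) * a)|
          ≤ (p - 1) * (2 * |a|) ^ (p - 2) * |b| := by
        refine hphi.trans ?_
        rw [show p - 2 + 1 = p - 1 from by ring]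
        exact mul_le_mul (mul_le_mul_of_nonneg_left hmaxp (by linarith)) hsub
          (abs_nonneg _)
          (mul_nonneg (by linarith) (Real.rpow_nonneg (by positivity) _))
      rw [Real.norm_eq_abs, hc,
        show p * |a + b * t| ^ (p - 2) * (a + b * t) * b - p * |a| ^ (p - 2) * a * b
          = p * b * ((|a + b * t| ^ (p - 2) * (a + b * t)) - |a| ^ (p - 2) * a) from by ring,
        abs_mul, abs_mul, abs_of_pos hp0, hKd]
      calc p * |b| * |(|a + b * t| ^ (p - 2) * (a + b * t) - |a| ^ (p - 2) * a)|
          ≤ p * |b| * ((p - 1) * (2 * |a|) ^ (p - 2) * |b|) :=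
            mul_le_mul_of_nonneg_left hphi2 (by positivity)
        _ = p * ((p - 1) * (2 * |a|) ^ (p - 2) * |b|) * |b| := by ring
    have key := Convex.norm_image_sub_le_of_norm_hasDerivWithin_le hderiv hbound
      (convex_Icc 0 1) (Set.left_mem_Icc.2 zero_le_one) (Set.right_mem_Icc.2 zero_le_one)
    simp only [mul_one, mul_zero, add_zero, sub_zero, Real.norm_eq_abs] at key
    rw [abs_one, mul_one] at key
    -- key : |(|a + b| ^ p - c) - |a| ^ p| ≤ K
    have hbb : |b| * |b| = |b| ^ (2:ℝ) := by
      rw [show (2:ℝ) = ((2:ℕ):ℝ) from by norm_num, Real.rpow_natCast]; ring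
    have hbp : |b| ^ p ≤ A1 := by
      rw [hA1d]
      have hsp : |b| ^ p = |b| ^ (p - 2) * |b| ^ (2:ℝ) := by
        rw [← Real.rpow_add' (abs_nonneg b)
          (show p - 2 + 2 ≠ 0 from by intro h; nlinarith),
          show p - 2 + 2 = p from by ring]
      rw [hsp]
      exact mul_le_mul_of_nonneg_right (Real.rpow_le_rpow (abs_nonneg b) hab.le hq)
        (Real.rpow_nonneg (abs_nonneg b) _)
    have hK : K ≤ p * p * 2 ^ p * A1 := by
      rw [hKd, Real.mul_rpow (by norm_num) (abs_nonneg a), hA1d]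
      have h2e : (2:ℝ) ^ (p - 2) ≤ 2 ^ p :=
        Real.rpow_le_rpow_of_exponent_le one_le_two (by linarith)
      have e : p * (p - 1) * 2 ^ (p - 2) ≤ p * p * 2 ^ p := by
        have h1 : p * (p - 1) ≤ p * p := by nlinarith
        have h2 : (0:ℝ) < 2 ^ (p - 2) := Real.rpow_pos_of_pos two_pos _
        nlinarith
      calc p * ((p - 1) * (2 ^ (p - 2) * |a| ^ (p - 2)) * |b|) * |b|
          = p * (p - 1) * 2 ^ (p - 2) * (|a| ^ (p - 2) * (|b| * |b|)) := by ring
        _ ≤ p * p * 2 ^ p * (|a| ^ (p - 2) * (|b| * |b|)) := by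
            have hn : (0:ℝ) ≤ |a| ^ (p - 2) * (|b| * |b|) := by positivity
            exact mul_le_mul_of_nonneg_right e hn
        _ = p * p * 2 ^ p * (|a| ^ (p - 2) * |b| ^ (2:ℝ)) := by rw [hbb]
    have tri : |(|a + b| ^ p - |a| ^ p - c - |b| ^ p)|
        ≤ |(|a + b| ^ p - c - |a| ^ p)| + |b| ^ p := by
      have h1 := abs_add_le (|a + b| ^ p - c - |a| ^ p) (-(|b| ^ p))
      have h2 : |(-(|b| ^ p))| = |b| ^ p := by
        rw [abs_neg]; exact abs_of_nonneg (Real.rpow_nonneg (abs_nonneg b) _)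
      rw [h2] at h1
      calc |(|a + b| ^ p - |a| ^ p - c - |b| ^ p)|
          = |(|a + b| ^ p - c - |a| ^ p) + -(|b| ^ p)| := by ring_nf
        _ ≤ |(|a + b| ^ p - c - |a| ^ p)| + |b| ^ p := h1
    have hcoef : p * p * 2 ^ p + 1 ≤ C := by
      rw [hC]
      nlinarith [mul_nonneg (show (0:ℝ) ≤ p + 1 by linarith) h2p.le]
    have hfin : p * p * 2 ^ p * A1 + A1 ≤ C * (A1 + A2) := by
      nlinarith [mul_le_mul_of_nonneg_right hcoef hA1, mul_nonneg hC0.le hA2]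
    calc |(|a + b| ^ p - |a| ^ p - c - |b| ^ p)|
        ≤ |(|a + b| ^ p - c - |a| ^ p)| + |b| ^ p := tri
      _ ≤ p * p * 2 ^ p * A1 + A1 := by linarith
      _ ≤ C * (A1 + A2) := hfin
end

section
/- Let (X, μ) be a measure space, 1 < p < ∞, and let (f_n) be a sequence in L^p(X, μ) that is bounded in L^p norm and converges μ-almost everywhere to a measurable function f. Then f ∈ L^p(X, μ) and f_n converges to f weakly in L^p(X, μ). -/
open MeasureTheory Filter Topology Real
open scoped ENNReal NNReal

/-- A bounded sequence in `L^p` converging a.e. has its limit in `L^p` and converges weakly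
in `L^p`, i.e. against every `g` in the dual `L^{p/(p-1)}`. -/
theorem weak_Lp_convergence_of_ae_convergence
    {α : Type*} [MeasurableSpace α] (μ : Measure α) (p : ℝ) (hp : 1 < p)
    (f : ℕ → α → ℝ) (flim : α → ℝ)
    (hmeas : ∀ n, AEStronglyMeasurable (f n) μ)
    (hflim : AEStronglyMeasurable flim μ)
    (hbdd : ∃ C : ℝ, ∀ n, eLpNorm (f n) (ENNReal.ofReal p) μ ≤ ENNReal.ofReal C)
    (hae : ∀ᵐ x ∂μ, Tendsto (fun n => f n x) atTop (𝓝 (flim x))) :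
    MemLp flim (ENNReal.ofReal p) μ ∧
      ∀ g : α → ℝ, MemLp g (ENNReal.ofReal (p / (p - 1))) μ →
        Tendsto (fun n => ∫ x, f n x * g x ∂μ) atTop (𝓝 (∫ x, flim x * g x ∂μ)) := by
  obtain ⟨C, hC⟩ := hbdd
  set pe := ENNReal.ofReal p with hpe
  set qe := ENNReal.ofReal (p / (p - 1)) with hqe
  have hp0 : 0 < p := lt_trans one_pos hp
  have hp1 : 0 < p - 1 := by linarith
  have hq0 : 0 < p / (p - 1) := div_pos hp0 hp1
  have hpqr : (1 : ℝ≥0∞) / 1 = 1 / pe + 1 / qe := by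
    rw [hpe, hqe, one_div, one_div, one_div, ← ENNReal.ofReal_inv_of_pos hp0,
      ← ENNReal.ofReal_inv_of_pos hq0, ← ENNReal.ofReal_add (by positivity) (by positivity),
      inv_one, inv_div, show p⁻¹ + (p - 1) / p = 1 by field_simp; ring]
    simp
  haveI hH : ENNReal.HolderTriple pe qe 1 := ⟨by rw [inv_one]; simpa [one_div] using hpqr.symm⟩
  have hmemf : ∀ n, MemLp (f n) pe μ := fun n =>
    ⟨hmeas n, lt_of_le_of_lt (hC n) ENNReal.ofReal_lt_top⟩
  have hliminf : eLpNorm flim pe μ ≤ ENNReal.ofReal C :=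
    (Lp.eLpNorm_lim_le_liminf_eLpNorm hmeas flim hae).trans
      (liminf_le_of_frequently_le' (Frequently.of_forall hC))
  have hmemlim : MemLp flim pe μ := ⟨hflim, lt_of_le_of_lt hliminf ENNReal.ofReal_lt_top⟩
  refine ⟨hmemlim, fun g hg => ?_⟩
  have hq1 : 1 ≤ p / (p - 1) := by rw [le_div_iff₀ hp1]; linarith
  have hqe1 : (1 : ℝ≥0∞) ≤ qe := by
    rw [hqe, ← ENNReal.ofReal_one]; exact ENNReal.ofReal_le_ofReal hq1
  have hqetop : qe ≠ ∞ := ENNReal.ofReal_ne_top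
  have hprodmeas : ∀ n, AEStronglyMeasurable (fun x => f n x * g x) μ := fun n =>
    (hmeas n).mul hg.1
  have hmemprod : ∀ n, MemLp (fun x => f n x * g x) 1 μ := fun n =>
    hg.smul (hmemf n)
  have hmemlimprod : MemLp (fun x => flim x * g x) 1 μ := hg.smul hmemlim
  -- Uniform integrability of the products
  have hui : UnifIntegrable (fun n x => f n x * g x) 1 μ := by
    intro ε hε
    set D : ℝ := max C 0 + 1 with hD
    have hDpos : 0 < D := by positivity
    obtain ⟨δ, hδpos, hδg⟩ := hg.eLpNorm_indicator_le hqe1 hqetop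
      (show 0 < ε / D from div_pos hε hDpos)
    refine ⟨δ, hδpos, fun i s hs hμs => ?_⟩
    have hind : s.indicator (fun x => f i x * g x) = f i • s.indicator g := by
      funext x
      by_cases hx : x ∈ s <;> simp [Set.indicator, hx]
    rw [hind]
    calc eLpNorm (f i • s.indicator g) 1 μ
        ≤ eLpNorm (f i) pe μ * eLpNorm (s.indicator g) qe μ :=
          eLpNorm_smul_le_mul_eLpNorm (hg.1.indicator hs) (hmeas i)
      _ ≤ ENNReal.ofReal D * ENNReal.ofReal (ε / D) := by
          refine mul_le_mul' ((hC i).trans (ENNReal.ofReal_le_ofReal ?_)) (hδg s hs hμs)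
          rw [hD]
          have := le_max_left C 0
          linarith
      _ ≤ ENNReal.ofReal ε := by
          rw [← ENNReal.ofReal_mul hDpos.le, mul_div_cancel₀ _ hDpos.ne']
  -- Uniform tightness of the products
  have hut : UnifTight (fun n x => f n x * g x) 1 μ := by
    intro ε hε
    have hDnz : (C.toNNReal + 1 : ℝ≥0) ≠ 0 := by positivity
    have hε' : (0 : ℝ≥0) < ε / (C.toNNReal + 1) := by positivity
    obtain ⟨s, hsm, hsμ, hsg⟩ :=
      (unifTight_const (ι := ℕ) (μ := μ) hqetop hg).exists_measurableSet_indicator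
        (ε := ((ε / (C.toNNReal + 1) : ℝ≥0) : ℝ≥0∞)) (by exact_mod_cast hε'.ne')
    refine ⟨s, hsμ.ne, fun i => ?_⟩
    have hind : sᶜ.indicator (fun x => f i x * g x) = f i • sᶜ.indicator g := by
      funext x
      by_cases hx : x ∈ sᶜ <;> simp [Set.indicator, hx]
    rw [hind]
    calc eLpNorm (f i • sᶜ.indicator g) 1 μ
        ≤ eLpNorm (f i) pe μ * eLpNorm (sᶜ.indicator g) qe μ :=
          eLpNorm_smul_le_mul_eLpNorm (hg.1.indicator hsm.compl) (hmeas i)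
      _ ≤ (C.toNNReal + 1 : ℝ≥0) * ((ε / (C.toNNReal + 1) : ℝ≥0) : ℝ≥0∞) := by
          refine mul_le_mul' ((hC i).trans ?_) (hsg i)
          rw [show ENNReal.ofReal C = (C.toNNReal : ℝ≥0∞) from rfl]
          exact_mod_cast (lt_add_one C.toNNReal).le
      _ = (ε : ℝ≥0∞) := by
          rw [← ENNReal.coe_mul, mul_div_cancel₀ _ hDnz]
  -- a.e. convergence of products
  have hfg' : ∀ᵐ x ∂μ, Tendsto (fun n => f n x * g x) atTop (𝓝 (flim x * g x)) :=
    hae.mono fun x hx => hx.mul_const (g x)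
  have hL1 := tendsto_Lp_of_tendsto_ae (μ := μ) le_rfl ENNReal.one_ne_top
    hprodmeas hmemlimprod hui hut hfg'
  exact tendsto_integral_of_L1' _ (memLp_one_iff_integrable.mp hmemlimprod).aestronglyMeasurable
    (Eventually.of_forall fun n => memLp_one_iff_integrable.mp (hmemprod n)) hL1
end

section
/- Let (X, μ) be a measure space, 1 < p < ∞, let (v_n) be a sequence in L^p(X, μ) that is bounded in L^p and converges to 0 almost everywhere, and let u ∈ L^p(X, μ). Then ∫ | |v_n + u|^p − |u|^p − |v_n|^p | dμ need not vanish termwise, but ∫ |v_n + u|^p dμ − ∫ |v_n|^p dμ − ∫ |u|^p dμ → 0 as n → ∞. -/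
open MeasureTheory Filter Topology Real

section BLaux
open Real Set

lemma BL_mvt (p : ℝ) (hp : 1 ≤ p) {x y : ℝ} (hy : 0 ≤ y) (hxy : y ≤ x) :
    x ^ p - y ^ p ≤ p * x ^ (p - 1) * (x - y) := by
  rcases eq_or_lt_of_le hxy with rfl | h
  · simp
  have hx : 0 ≤ x := hy.trans hxy
  have hcont : ContinuousOn (fun t : ℝ => t ^ p) (Set.Icc y x) := fun t _ =>
    (Real.continuousAt_rpow_const t p (Or.inr (by linarith))).continuousWithinAt
  obtain ⟨c, hc, hc'⟩ := exists_hasDerivAt_eq_slope (fun t => t ^ p)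
    (fun t => p * t ^ (p - 1)) h hcont
    (fun t _ => Real.hasDerivAt_rpow_const (Or.inr hp))
  have hcxy : x ^ p - y ^ p = p * c ^ (p - 1) * (x - y) := by
    rw [hc', div_mul_cancel₀]
    exact sub_ne_zero.2 (ne_of_gt h)
  rw [hcxy]
  have hc0 : 0 ≤ c := hy.trans hc.1.le
  have := Real.rpow_le_rpow hc0 hc.2.le (by linarith : (0:ℝ) ≤ p - 1)
  have hp0 : 0 < p := by linarith
  have hxy0 : (0:ℝ) ≤ x - y := by linarith
  nlinarith [Real.rpow_nonneg hc0 (p-1), mul_le_mul_of_nonneg_right this hxy0]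

lemma BL_young (p : ℝ) (hp : 1 < p) {a b δ : ℝ} (ha : 0 ≤ a) (hb : 0 ≤ b) (hδ : 0 < δ) :
    a ^ (p - 1) * b ≤ δ * a ^ p + δ ^ (1 - p) * b ^ p := by
  have h1 : ∀ t : ℝ, 0 ≤ t → t ^ (p - 1) * t = t ^ p := by
    intro t ht
    rcases eq_or_lt_of_le ht with rfl | h
    · rw [Real.zero_rpow (by linarith), Real.zero_rpow (by linarith), mul_zero]
    · rw [← Real.rpow_add_one (ne_of_gt h), sub_add_cancel]
  rcases le_total b (δ * a) with hba | hba
  · calc a ^ (p - 1) * b ≤ a ^ (p - 1) * (δ * a) := by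
          apply mul_le_mul_of_nonneg_left hba (Real.rpow_nonneg ha _)
      _ = δ * a ^ p := by rw [← h1 a ha]; ring
      _ ≤ δ * a ^ p + δ ^ (1 - p) * b ^ p := by
          nlinarith [mul_nonneg (Real.rpow_nonneg hδ.le (1-p)) (Real.rpow_nonneg hb p)]
  · have hab : a ≤ b / δ := (le_div_iff₀ hδ).2 (by linarith [mul_comm a δ])
    calc a ^ (p - 1) * b ≤ (b / δ) ^ (p - 1) * b := by
          apply mul_le_mul_of_nonneg_right
            (Real.rpow_le_rpow ha hab (by linarith)) hb
      _ = δ ^ (1 - p) * b ^ p := by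
          rw [Real.div_rpow hb hδ.le, div_mul_eq_mul_div, h1 b hb,
            div_eq_mul_inv, ← Real.rpow_neg hδ.le, neg_sub]
          ring
      _ ≤ δ * a ^ p + δ ^ (1 - p) * b ^ p := by
          nlinarith [mul_nonneg hδ.le (Real.rpow_nonneg ha p)]

lemma BL_key (p : ℝ) (hp : 1 < p) {ε : ℝ} (hε : 0 < ε) :
    ∃ C : ℝ, 0 ≤ C ∧ ∀ a b : ℝ, abs (|a + b| ^ p - |a| ^ p) ≤ ε * |a| ^ p + C * |b| ^ p := by
  have hp0 : (0:ℝ) < p := by linarith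
  have h1 : ∀ t : ℝ, 0 ≤ t → t ^ (p - 1) * t = t ^ p := by
    intro t ht
    rcases eq_or_lt_of_le ht with rfl | h
    · rw [Real.zero_rpow (by linarith), Real.zero_rpow (by linarith), mul_zero]
    · rw [← Real.rpow_add_one (ne_of_gt h), sub_add_cancel]
  set K : ℝ := p * 2 ^ (p - 1) with hK
  have hKpos : 0 < K := mul_pos hp0 (Real.rpow_pos_of_pos two_pos _)
  set δ : ℝ := ε / K with hδdef
  have hδ : 0 < δ := div_pos hε hKpos
  refine ⟨K * (δ ^ (1 - p) + 1), by positivity, fun a b => ?_⟩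
  -- step 1: | |a+b|^p - |a|^p | ≤ p * (|a|+|b|)^(p-1) * |b|
  have step1 : abs (|a + b| ^ p - |a| ^ p) ≤ p * (|a| + |b|) ^ (p - 1) * |b| := by
    rcases le_total (|a|) (|a + b|) with hle | hle
    · have h2 := BL_mvt p hp.le (abs_nonneg a) hle
      have h3 : |a + b| - |a| ≤ |b| := by
        have := abs_sub_abs_le_abs_sub (a + b) a
        simpa using this
      have h4 : |a + b| ^ (p - 1) ≤ (|a| + |b|) ^ (p - 1) :=
        Real.rpow_le_rpow (abs_nonneg _) (abs_add_le a b) (by linarith)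
      have h5 : |a| ^ p ≤ |a + b| ^ p := Real.rpow_le_rpow (abs_nonneg a) hle hp0.le
      rw [abs_of_nonneg (by linarith)]
      calc |a + b| ^ p - |a| ^ p ≤ p * |a + b| ^ (p - 1) * (|a + b| - |a|) := h2
        _ ≤ p * (|a| + |b|) ^ (p - 1) * |b| := by
            apply mul_le_mul (mul_le_mul_of_nonneg_left h4 hp0.le) h3
              (by linarith) (by positivity)
    · have h2 := BL_mvt p hp.le (abs_nonneg (a + b)) hle
      have h3 : |a| - |a + b| ≤ |b| := by
        have := abs_sub_abs_le_abs_sub a (a + b)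
        simpa using this
      have h4 : |a| ^ (p - 1) ≤ (|a| + |b|) ^ (p - 1) :=
        Real.rpow_le_rpow (abs_nonneg _) (by linarith [abs_nonneg b]) (by linarith)
      have h5 : |a + b| ^ p ≤ |a| ^ p := Real.rpow_le_rpow (abs_nonneg _) hle hp0.le
      rw [abs_of_nonpos (by linarith), neg_sub]
      calc |a| ^ p - |a + b| ^ p ≤ p * |a| ^ (p - 1) * (|a| - |a + b|) := h2
        _ ≤ p * (|a| + |b|) ^ (p - 1) * |b| := by
            apply mul_le_mul (mul_le_mul_of_nonneg_left h4 hp0.le) h3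
              (by linarith) (by positivity)
  -- step 2: (|a|+|b|)^(p-1) ≤ 2^(p-1) * (|a|^(p-1) + |b|^(p-1))
  have step2 : (|a| + |b|) ^ (p - 1) ≤ 2 ^ (p - 1) * (|a| ^ (p - 1) + |b| ^ (p - 1)) := by
    have hm : |a| + |b| ≤ 2 * max (|a|) (|b|) := by
      rcases le_total (|a|) (|b|) with h | h
      · rw [max_eq_right h]; linarith
      · rw [max_eq_left h]; linarith
    calc (|a| + |b|) ^ (p - 1) ≤ (2 * max (|a|) (|b|)) ^ (p - 1) :=
          Real.rpow_le_rpow (by positivity) hm (by linarith)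
      _ = 2 ^ (p - 1) * max (|a|) (|b|) ^ (p - 1) := by
          rw [Real.mul_rpow (by norm_num) (le_max_iff.2 (Or.inl (abs_nonneg a)))]
      _ ≤ 2 ^ (p - 1) * (|a| ^ (p - 1) + |b| ^ (p - 1)) := by
          apply mul_le_mul_of_nonneg_left _ (by positivity)
          rcases le_total (|a|) (|b|) with h | h
          · rw [max_eq_right h]
            nlinarith [Real.rpow_nonneg (abs_nonneg a) (p - 1)]
          · rw [max_eq_left h]
            nlinarith [Real.rpow_nonneg (abs_nonneg b) (p - 1)]
  have step3 : abs (|a + b| ^ p - |a| ^ p) ≤ K * (|a| ^ (p - 1) * |b|) + K * |b| ^ p := by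
    calc abs (|a + b| ^ p - |a| ^ p) ≤ p * (|a| + |b|) ^ (p - 1) * |b| := step1
      _ ≤ p * (2 ^ (p - 1) * (|a| ^ (p - 1) + |b| ^ (p - 1))) * |b| := by
          apply mul_le_mul_of_nonneg_right (mul_le_mul_of_nonneg_left step2 hp0.le)
            (abs_nonneg b)
      _ = K * (|a| ^ (p - 1) * |b|) + K * (|b| ^ (p - 1) * |b|) := by ring
      _ = K * (|a| ^ (p - 1) * |b|) + K * |b| ^ p := by rw [h1 (|b|) (abs_nonneg b)]
  have step4 := BL_young p hp (abs_nonneg a) (abs_nonneg b) hδ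
  have hKδ : K * δ = ε := by rw [hδdef, mul_div_cancel₀ _ (ne_of_gt hKpos)]
  calc abs (|a + b| ^ p - |a| ^ p) ≤ K * (|a| ^ (p - 1) * |b|) + K * |b| ^ p := step3
    _ ≤ K * (δ * |a| ^ p + δ ^ (1 - p) * |b| ^ p) + K * |b| ^ p :=
        add_le_add_left (mul_le_mul_of_nonneg_left step4 hKpos.le) _
    _ = ε * |a| ^ p + K * (δ ^ (1 - p) + 1) * |b| ^ p := by rw [← hKδ]; ring

end BLaux

/-- Brezis–Lieb lemma for the `p`-th power of the absolute value: if `(v n)` is bounded in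
`L^p` and converges to `0` a.e., and `u ∈ L^p`, then
`∫ |vₙ+u|^p − ∫ |vₙ|^p − ∫ |u|^p → 0`. -/
theorem brezis_lieb_power
    {α : Type*} [MeasurableSpace α] (μ : Measure α) (p : ℝ) (hp : 1 < p)
    (v : ℕ → α → ℝ) (u : α → ℝ)
    (hmeas : ∀ n, AEStronglyMeasurable (v n) μ)
    (hbdd : ∃ C : ℝ, ∀ n, eLpNorm (v n) (ENNReal.ofReal p) μ ≤ ENNReal.ofReal C)
    (hae : ∀ᵐ x ∂μ, Tendsto (fun n => v n x) atTop (𝓝 0))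
    (hu : MemLp u (ENNReal.ofReal p) μ) :
    Tendsto (fun n =>
        (∫ x, |v n x + u x| ^ p ∂μ) - (∫ x, |v n x| ^ p ∂μ) - (∫ x, |u x| ^ p ∂μ))
      atTop (𝓝 0) := by
  obtain ⟨C0, hC0⟩ := hbdd
  have hp0 : (0:ℝ) < p := by linarith
  set q := ENNReal.ofReal p with hq
  have hq0 : q ≠ 0 := by simp only [hq, ne_eq, ENNReal.ofReal_eq_zero, not_le]; linarith
  have hqtop : q ≠ ⊤ := ENNReal.ofReal_ne_top
  have hqr : q.toReal = p := ENNReal.toReal_ofReal hp0.le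
  have hv : ∀ n, MemLp (v n) q μ := fun n =>
    ⟨hmeas n, lt_of_le_of_lt (hC0 n) ENNReal.ofReal_lt_top⟩
  have hvu : ∀ n, MemLp (fun x => v n x + u x) q μ := fun n => (hv n).add hu
  have hint : ∀ (f : α → ℝ), MemLp f q μ → Integrable (fun x => |f x| ^ p) μ := by
    intro f hf
    have := hf.integrable_norm_rpow hq0 hqtop
    simpa [hqr, Real.norm_eq_abs] using this
  have hBint : ∀ n, Integrable (fun x => |v n x| ^ p) μ := fun n => hint _ (hv n)
  have hAint : ∀ n, Integrable (fun x => |v n x + u x| ^ p) μ := fun n => hint _ (hvu n)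
  have hCint : Integrable (fun x => |u x| ^ p) μ := hint _ hu
  -- uniform bound on ∫ |v n|^p
  set M : ℝ := ((ENNReal.ofReal C0) ^ p).toReal with hM
  have hM0 : 0 ≤ M := ENNReal.toReal_nonneg
  have hBle : ∀ n, ∫ x, |v n x| ^ p ∂μ ≤ M := by
    intro n
    have h1 : ∫ x, |v n x| ^ p ∂μ
        = (∫⁻ x, ENNReal.ofReal (|v n x| ^ p) ∂μ).toReal :=
      integral_eq_lintegral_of_nonneg_ae
        (Filter.Eventually.of_forall fun x => Real.rpow_nonneg (abs_nonneg _) p)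
        (hBint n).1
    have h2 : ∫⁻ x, ENNReal.ofReal (|v n x| ^ p) ∂μ
        = ∫⁻ x, (‖v n x‖₊ : ENNReal) ^ p ∂μ := by
      apply lintegral_congr; intro x
      rw [← ENNReal.ofReal_coe_nnreal, coe_nnnorm, Real.norm_eq_abs,
        ← ENNReal.ofReal_rpow_of_nonneg (abs_nonneg _) hp0.le]
    have h3 := hC0 n
    rw [eLpNorm_eq_lintegral_rpow_enorm_toReal hq0 hqtop, hqr] at h3
    have h4 : ∫⁻ x, (‖v n x‖₊ : ENNReal) ^ p ∂μ ≤ (ENNReal.ofReal C0) ^ p := by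
      have h5 := ENNReal.rpow_le_rpow h3 hp0.le
      rwa [← ENNReal.rpow_mul, one_div, inv_mul_cancel₀ (ne_of_gt hp0),
        ENNReal.rpow_one] at h5
    rw [h1, h2, hM]
    exact ENNReal.toReal_mono
      (ENNReal.rpow_ne_top_of_nonneg hp0.le ENNReal.ofReal_ne_top) h4
  -- the ε-argument
  rw [Metric.tendsto_atTop]
  intro ε hε
  have hε' : 0 < ε / (2 * (M + 1)) := by positivity
  set ε' : ℝ := ε / (2 * (M + 1)) with hε'def
  obtain ⟨Cε, hCε0, hkey⟩ := BL_key p hp hε'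
  set W : ℕ → α → ℝ := fun n x =>
    max (|(|v n x + u x| ^ p - |v n x| ^ p - |u x| ^ p)| - ε' * |v n x| ^ p) 0 with hW
  have hWmeas : ∀ n, AEStronglyMeasurable (W n) μ := by
    intro n
    have h1 : AEStronglyMeasurable
        (fun x => |v n x + u x| ^ p - |v n x| ^ p - |u x| ^ p) μ :=
      ((hAint n).1.sub (hBint n).1).sub hCint.1
    have h2 : AEStronglyMeasurable
        (fun x => |(|v n x + u x| ^ p - |v n x| ^ p - |u x| ^ p)|) μ := by
      simpa [Real.norm_eq_abs] using h1.norm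
    exact (h2.sub ((hBint n).1.const_mul ε')).sup aestronglyMeasurable_const
  have hWnonneg : ∀ n x, 0 ≤ W n x := fun n x => le_max_right _ _
  have hWle : ∀ n x, W n x ≤ (Cε + 1) * |u x| ^ p := by
    intro n x
    apply max_le _ (by positivity)
    have h1 := hkey (v n x) (u x)
    have h2 : |(|v n x + u x| ^ p - |v n x| ^ p - |u x| ^ p)|
        ≤ |(|v n x + u x| ^ p - |v n x| ^ p)| + |u x| ^ p := by
      have := abs_sub (|v n x + u x| ^ p - |v n x| ^ p) (|u x| ^ p)
      calc |(|v n x + u x| ^ p - |v n x| ^ p - |u x| ^ p)|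
          ≤ |(|v n x + u x| ^ p - |v n x| ^ p)| + |(|u x| ^ p)| := abs_sub _ _
        _ = |(|v n x + u x| ^ p - |v n x| ^ p)| + |u x| ^ p := by
            rw [abs_of_nonneg (Real.rpow_nonneg (abs_nonneg _) p)]
    linarith
  have hWint : ∀ n, Integrable (W n) μ := by
    intro n
    apply Integrable.mono (hCint.const_mul (Cε + 1)) (hWmeas n)
    apply Filter.Eventually.of_forall
    intro x
    rw [Real.norm_eq_abs, Real.norm_eq_abs, abs_of_nonneg (hWnonneg n x),
      abs_of_nonneg (by positivity : (0:ℝ) ≤ (Cε + 1) * |u x| ^ p)]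
    exact hWle n x
  -- continuity helper
  have habs : Continuous fun t : ℝ => |t| ^ p :=
    (continuous_iff_continuousAt.2 fun x =>
      Real.continuousAt_rpow_const x p (Or.inr hp0.le)).comp continuous_abs
  -- dominated convergence
  have hWtend : Tendsto (fun n => ∫ x, W n x ∂μ) atTop (𝓝 0) := by
    have := tendsto_integral_of_dominated_convergence
      (fun x => (Cε + 1) * |u x| ^ p) hWmeas (hCint.const_mul (Cε + 1))
      (fun n => Filter.Eventually.of_forall fun x => by
        rw [Real.norm_eq_abs, abs_of_nonneg (hWnonneg n x)]; exact hWle n x)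
      (F := W) (f := fun _ => (0:ℝ)) ?_
    · simpa using this
    · filter_upwards [hae] with x hx
      have hA : Tendsto (fun n => |v n x + u x| ^ p) atTop (𝓝 (|u x| ^ p)) := by
        have h1 : Tendsto (fun n => v n x + u x) atTop (𝓝 (0 + u x)) :=
          hx.add tendsto_const_nhds
        rw [zero_add] at h1
        exact (habs.tendsto (u x)).comp h1
      have hB : Tendsto (fun n => |v n x| ^ p) atTop (𝓝 0) := by
        have h1 := (habs.tendsto 0).comp hx
        simpa [Function.comp_def, abs_zero, Real.zero_rpow (ne_of_gt hp0)] using h1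
      have h2 : Tendsto (fun n =>
          |(|v n x + u x| ^ p - |v n x| ^ p - |u x| ^ p)| - ε' * |v n x| ^ p)
          atTop (𝓝 0) := by
        have h3 := ((hA.sub hB).sub tendsto_const_nhds
          (b := |u x| ^ p)).abs.sub (hB.const_mul ε')
        simpa using h3
      have h4 := h2.max (tendsto_const_nhds (x := (0:ℝ)))
      simpa using h4
  obtain ⟨N, hN⟩ := (Metric.tendsto_atTop.1 hWtend) (ε / 2) (by positivity)
  refine ⟨N, fun n hn => ?_⟩
  rw [Real.dist_eq, sub_zero]
  have hg : (∫ x, |v n x + u x| ^ p ∂μ) - (∫ x, |v n x| ^ p ∂μ)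
      - (∫ x, |u x| ^ p ∂μ)
      = ∫ x, (|v n x + u x| ^ p - |v n x| ^ p - |u x| ^ p) ∂μ := by
    have i1 : Integrable (fun x => |v n x + u x| ^ p - |v n x| ^ p) μ :=
      (hAint n).sub (hBint n)
    rw [← integral_sub (hAint n) (hBint n), ← integral_sub i1 hCint]
  rw [hg]
  have habs_int : |∫ x, (|v n x + u x| ^ p - |v n x| ^ p - |u x| ^ p) ∂μ|
      ≤ ∫ x, |(|v n x + u x| ^ p - |v n x| ^ p - |u x| ^ p)| ∂μ := by
    simpa [Real.norm_eq_abs] using norm_integral_le_integral_norm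
      (fun x => |v n x + u x| ^ p - |v n x| ^ p - |u x| ^ p) (μ := μ)
  have hmono : ∫ x, |(|v n x + u x| ^ p - |v n x| ^ p - |u x| ^ p)| ∂μ
      ≤ ∫ x, (W n x + ε' * |v n x| ^ p) ∂μ := by
    have iabs : Integrable (fun x => |(|v n x + u x| ^ p - |v n x| ^ p - |u x| ^ p)|) μ :=
      (((hAint n).sub (hBint n)).sub hCint).abs
    apply integral_mono iabs ((hWint n).add ((hBint n).const_mul ε'))
    intro x
    have h6 := le_max_left (|(|v n x + u x| ^ p - |v n x| ^ p - |u x| ^ p)|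
      - ε' * |v n x| ^ p) (0:ℝ)
    simp only [Pi.add_apply]
    linarith [h6]
  have hsplit : ∫ x, (W n x + ε' * |v n x| ^ p) ∂μ
      = (∫ x, W n x ∂μ) + ε' * ∫ x, |v n x| ^ p ∂μ := by
    rw [integral_add (hWint n) ((hBint n).const_mul ε'), integral_const_mul]
  have hWn : ∫ x, W n x ∂μ < ε / 2 := by
    have := hN n hn
    rw [Real.dist_eq, sub_zero] at this
    exact lt_of_le_of_lt (le_abs_self _) this
  have hεM : ε' * ∫ x, |v n x| ^ p ∂μ ≤ ε' * M :=
    mul_le_mul_of_nonneg_left (hBle n) hε'.le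
  have hfin : ε' * M < ε / 2 := by
    rw [hε'def]
    rw [div_mul_eq_mul_div, div_lt_div_iff₀ (by positivity) (by norm_num)]
    nlinarith
  linarith
end

section
/- Let n, k be positive integers with 2k < n and q = 2n/(n−2k). Let H be a Hilbert space continuously embedded in L^q of a finite measure space, with a Sobolev-type inequality ‖u‖_{L^q}^2 ≤ (K+ε) Q(u) + B_ε ‖u‖_*^2 for all ε > 0, where Q(u) = ‖u‖_H^2 and ‖·‖_* is compact relative to ‖·‖_H. Suppose (v_n) ⊂ H satisfies v_n ⇀ 0 weakly in H, ‖v_n‖_* → 0, Q(v_n) − ‖v_n‖_{L^q}^q → 0, and (1/2)Q(v_n) − (1/q)‖v_n‖_{L^q}^q → β with 0 ≤ β < (k/n) K^{−n/(2k)}. Then Q(v_n) → 0 and hence v_n → 0 strongly in H. -/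
open Filter Topology Real

/-- Abstract form of Step 3: a Palais–Smale-type sequence converging weakly to `0`, with
energy level `β` below the threshold `(k/n) K^{-n/2k}`, converges strongly to `0`. -/
theorem strong_convergence_below_threshold
    {H : Type*} [NormedAddCommGroup H] [InnerProductSpace ℝ H]
    (n k : ℕ) (hk : 0 < k) (h2k : 2 * k < n)
    (q : ℝ) (hq : q = 2 * n / ((n : ℝ) - 2 * k))
    (K : ℝ) (hK : 0 < K)
    (Lq Nstar : H → ℝ) (hLq : ∀ u, 0 ≤ Lq u) (hNstar : ∀ u, 0 ≤ Nstar u)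
    (hsob : ∀ ε > (0 : ℝ), ∃ B : ℝ, ∀ u : H,
      Lq u ^ 2 ≤ (K + ε) * ‖u‖ ^ 2 + B * Nstar u ^ 2)
    (v : ℕ → H)
    (hweak : ∀ w : H, Tendsto (fun m => (inner ℝ (v m) w : ℝ)) atTop (𝓝 0))
    (hNs : Tendsto (fun m => Nstar (v m)) atTop (𝓝 0))
    (hPS : Tendsto (fun m => ‖v m‖ ^ 2 - Lq (v m) ^ q) atTop (𝓝 0))
    (β : ℝ)
    (hβ : Tendsto (fun m => (1 / 2) * ‖v m‖ ^ 2 - (1 / q) * Lq (v m) ^ q) atTop (𝓝 β))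
    (hβ0 : 0 ≤ β) (hβlt : β < (k : ℝ) / n * K ^ (-(n : ℝ) / (2 * k))) :
    Tendsto (fun m => ‖v m‖) atTop (𝓝 0) := by
  have hk0 : (0:ℝ) < k := by exact_mod_cast hk
  have hn0 : (0:ℝ) < n := by
    have : 0 < n := lt_trans (by omega) h2k
    exact_mod_cast this
  have hd : (0:ℝ) < (n:ℝ) - 2*k := by
    have : (2*k : ℝ) < n := by exact_mod_cast h2k
    linarith
  have hq0 : 0 < q := by rw [hq]; positivity
  have hqne : q ≠ 0 := ne_of_gt hq0
  have hkn : (1:ℝ)/2 - 1/q = k/n := by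
    rw [hq]; field_simp; ring
  set Q : ℕ → ℝ := fun m => ‖v m‖^2 with hQdef
  set L : ℕ → ℝ := fun m => Lq (v m) ^ q with hLdef
  -- (k/n) * Q m tends to β
  have h1 : Tendsto (fun m => (k/(n:ℝ)) * Q m) atTop (𝓝 β) := by
    have := hβ.sub (hPS.const_mul (1/q))
    rw [mul_zero, sub_zero] at this
    convert this using 1
    funext m
    rw [← hkn]; ring
  set A : ℝ := (n/(k:ℝ)) * β with hAdef
  have hA0 : 0 ≤ A := by positivity
  have hQlim : Tendsto Q atTop (𝓝 A) := by
    have := h1.const_mul ((n:ℝ)/k)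
    convert this using 2 with m
    field_simp
  have hLlim : Tendsto L atTop (𝓝 A) := by
    have := hQlim.sub hPS
    rw [sub_zero] at this
    convert this using 2 with m
    simp [hQdef, hLdef]
  -- A = 0
  have hAzero : A = 0 := by
    by_contra hA
    have hApos : 0 < A := lt_of_le_of_ne hA0 (Ne.symm hA)
    -- Lq (v m) tends to A^(1/q)
    have hrpow : ContinuousAt (fun x : ℝ => x ^ (1/q)) A :=
      Real.continuousAt_rpow_const A (1/q) (Or.inl hA)
    have hLq1 : Tendsto (fun m => Lq (v m)) atTop (𝓝 (A ^ (1/q))) := by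
      have := hrpow.tendsto.comp hLlim
      convert this using 2 with m
      simp only [Function.comp, hLdef]
      rw [one_div, Real.rpow_rpow_inv (hLq _) hqne]
    have hLq2 : Tendsto (fun m => Lq (v m) ^ 2) atTop (𝓝 ((A ^ (1/q)) ^ 2)) :=
      hLq1.pow 2
    have key : ∀ ε > (0:ℝ), (A ^ (1/q)) ^ 2 ≤ (K + ε) * A := by
      intro ε hε
      obtain ⟨B, hB⟩ := hsob ε hε
      have hrhs : Tendsto (fun m => (K + ε) * Q m + B * Nstar (v m) ^ 2)
          atTop (𝓝 ((K + ε) * A)) := by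
        have := (hQlim.const_mul (K + ε)).add ((hNs.pow 2).const_mul B)
        simpa using this
      exact le_of_tendsto_of_tendsto' hLq2 hrhs (fun m => hB (v m))
    have hKA : (A ^ (1/q)) ^ 2 ≤ K * A := by
      apply le_of_forall_pos_le_add
      intro ε hε
      have := key (ε / A) (by positivity)
      calc (A ^ (1/q)) ^ 2 ≤ (K + ε/A) * A := this
        _ = K * A + ε := by field_simp
    -- rewrite LHS as A^(2/q)
    have hL2 : (A ^ (1/q)) ^ 2 = A ^ (2/q) := by
      rw [← Real.rpow_natCast (A ^ (1/q)) 2, ← Real.rpow_mul hA0]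
      norm_num
      congr 1
      ring
    rw [hL2] at hKA
    have hexp : 2/q - 1 = -(2*(k:ℝ)/n) := by
      rw [hq]; field_simp; ring
    have hstep : A ^ (-(2*(k:ℝ)/n)) ≤ K := by
      have h2 : A ^ (2/q) = A ^ (2/q - 1) * A := by
        rw [← Real.rpow_add_one (ne_of_gt hApos)]; ring_nf
      rw [h2, hexp] at hKA
      exact le_of_mul_le_mul_right (by linarith) hApos
    have hzneg : -((n:ℝ)/(2*k)) ≤ 0 := neg_nonpos.mpr (by positivity)
    have hfin : K ^ (-((n:ℝ)/(2*k))) ≤ A := by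
      have := Real.rpow_le_rpow_of_nonpos (Real.rpow_pos_of_pos hApos _) hstep hzneg
      rwa [← Real.rpow_mul hA0, show (-(2*(k:ℝ)/n)) * (-((n:ℝ)/(2*k))) = 1 by
        field_simp, Real.rpow_one] at this
    have hβge : (k:ℝ)/n * K ^ (-(n:ℝ)/(2*k)) ≤ β := by
      have h3 : β = (k:ℝ)/n * A := by rw [hAdef]; field_simp
      rw [h3, show (-(n:ℝ)/(2*k)) = -((n:ℝ)/(2*k)) by ring]
      exact mul_le_mul_of_nonneg_left hfin (by positivity)
    linarith
  rw [hAzero] at hQlim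
  have := (Real.continuous_sqrt.tendsto 0).comp hQlim
  rw [Real.sqrt_zero] at this
  convert this using 2 with m
  simp [Function.comp, hQdef, Real.sqrt_sq (norm_nonneg _)]
end

section
/- Let f: ℝ^n → (0, ∞) be integrable and of the form f(x) = h(|x − a|) where h: [0,∞) → (0,∞) is strictly decreasing. Then for every z ≠ a, ∫_{B_z(1)} f dx < ∫_{B_a(1)} f dx. -/
open MeasureTheory Real

/-- The integral of a positive, radially strictly decreasing integrable function over a unit
ball is uniquely maximized when the ball is centered at the center of symmetry. -/
theorem ball_integral_strictly_maximized_at_center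
    (n : ℕ) (hn : 0 < n) (a : EuclideanSpace ℝ (Fin n)) (h : ℝ → ℝ)
    (hpos : ∀ r : ℝ, 0 ≤ r → 0 < h r)
    (hanti : StrictAntiOn h (Set.Ici (0 : ℝ)))
    (hint : Integrable (fun x : EuclideanSpace ℝ (Fin n) => h ‖x - a‖)) :
    ∀ z : EuclideanSpace ℝ (Fin n), z ≠ a →
      (∫ x in Metric.ball z 1, h ‖x - a‖) < ∫ x in Metric.ball a 1, h ‖x - a‖ := by
  intro z hz
  set f : EuclideanSpace ℝ (Fin n) → ℝ := fun x => h ‖x - a‖ with hf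
  set Ba := Metric.ball a 1
  set Bz := Metric.ball z 1
  set S₁ := Ba \ Bz with hS₁
  set S₂ := Bz \ Ba with hS₂
  have hd : (0:ℝ) < ‖a - z‖ := by
    rw [norm_pos_iff, sub_ne_zero]; exact fun e => hz e.symm
  set d := ‖a - z‖ with hdd
  -- a point p in S₁ with a small ball around it inside S₁
  set t : ℝ := 1 - min d 1 / 2 with ht
  have ht0 : 0 < t := by
    have : min d 1 ≤ 1 := min_le_right _ _
    simp only [ht]; linarith
  have ht1 : t < 1 := by
    have : 0 < min d 1 := lt_min hd one_pos
    simp only [ht]; linarith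
  have htd : 1 < d + t := by
    have : min d 1 ≤ d := min_le_left _ _
    simp only [ht]; linarith
  set p : EuclideanSpace ℝ (Fin n) := a + (t / d) • (a - z) with hp
  have hpa : ‖p - a‖ = t := by
    have e : p - a = (t / d) • (a - z) := by rw [hp]; module
    rw [e, norm_smul, Real.norm_eq_abs, abs_of_pos (div_pos ht0 hd), ← hdd]
    field_simp
  have hpz : ‖p - z‖ = d + t := by
    have e : p - z = (1 + t / d) • (a - z) := by rw [hp]; module
    rw [e, norm_smul, Real.norm_eq_abs,
      abs_of_pos (by positivity : (0:ℝ) < 1 + t / d), ← hdd]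
    field_simp
  set ε : ℝ := min (1 - t) (d + t - 1) / 2 with hε
  have hε0 : 0 < ε := by
    have h1 : 0 < 1 - t := by linarith
    have h2 : 0 < d + t - 1 := by linarith
    have := lt_min h1 h2
    simp only [hε]; linarith
  clear_value t ε
  have hball : Metric.ball p ε ⊆ S₁ := by
    intro x hx
    rw [Metric.mem_ball] at hx
    have hxa : ‖x - a‖ < 1 := by
      have h2 : ‖x - p‖ < ε := by rwa [← dist_eq_norm]
      have h3 : ε ≤ (1 - t) / 2 := by
        rw [hε]; gcongr; exact min_le_left _ _
      have h4 : ‖x - a‖ ≤ ‖x - p‖ + ‖p - a‖ := by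
        have := norm_add_le (x - p) (p - a)
        simpa using this
      rw [hpa] at h4
      linarith
    have hxz : 1 ≤ ‖x - z‖ := by
      have h2 : ‖x - p‖ < ε := by rwa [← dist_eq_norm]
      have h3 : ε ≤ (d + t - 1) / 2 := by
        rw [hε]; gcongr; exact min_le_right _ _
      have h4 : ‖p - z‖ ≤ ‖p - x‖ + ‖x - z‖ := by
        have := norm_add_le (p - x) (x - z)
        simpa using this
      rw [hpz] at h4
      rw [norm_sub_rev] at h2
      linarith
    constructor
    · rw [Metric.mem_ball, dist_eq_norm]; exact hxa
    · rw [Metric.mem_ball, dist_eq_norm]; intro hc; exact absurd hxz (not_le.mpr hc)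
  -- positivity of measure of S₁
  have hnt : Nontrivial (EuclideanSpace ℝ (Fin n)) := by
    have : 0 < Module.finrank ℝ (EuclideanSpace ℝ (Fin n)) := by
      simpa using hn
    exact Module.nontrivial_of_finrank_pos this
  have hS₁pos : 0 < volume S₁ :=
    lt_of_lt_of_le (Metric.measure_ball_pos volume p hε0) (measure_mono hball)
  -- measurability of sets
  have hmBa : MeasurableSet Ba := Metric.isOpen_ball.measurableSet
  have hmBz : MeasurableSet Bz := Metric.isOpen_ball.measurableSet
  have hmS₁ : MeasurableSet S₁ := hmBa.diff hmBz
  have hmS₂ : MeasurableSet S₂ := hmBz.diff hmBa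
  -- finiteness
  have hfinBa : volume Ba ≠ ⊤ := (measure_ball_lt_top).ne
  have hfinBz : volume Bz ≠ ⊤ := (measure_ball_lt_top).ne
  have hfinS₁ : volume S₁ ≠ ⊤ := ((measure_mono Set.diff_subset).trans_lt measure_ball_lt_top).ne
  have hfinS₂ : volume S₂ ≠ ⊤ := ((measure_mono Set.diff_subset).trans_lt measure_ball_lt_top).ne
  -- equal measures of symmetric differences
  have hmeq : volume S₁ = volume S₂ := by
    have h1 : volume (Ba ∩ Bz) + volume S₁ = volume Ba := measure_inter_add_diff Ba hmBz
    have h2 : volume (Bz ∩ Ba) + volume S₂ = volume Bz := measure_inter_add_diff Bz hmBa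
    have h3 : volume Ba = volume Bz := by
      rw [Measure.addHaar_ball_center volume a 1, Measure.addHaar_ball_center volume z 1]
    have hfin : volume (Ba ∩ Bz) ≠ ⊤ :=
      ((measure_mono Set.inter_subset_left).trans_lt measure_ball_lt_top).ne
    rw [Set.inter_comm Bz Ba] at h2
    have := h1.trans (h3.trans h2.symm)
    exact (ENNReal.add_right_inj hfin).mp this
  set m : ℝ := (volume S₁).toReal with hm
  have hmpos : 0 < m := ENNReal.toReal_pos hS₁pos.ne' hfinS₁
  have hmS₂m : (volume S₂).toReal = m := by rw [← hmeq]
  -- integrability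
  have hintBa : IntegrableOn f Ba := hint.integrableOn
  have hintBz : IntegrableOn f Bz := hint.integrableOn
  have hintS₁ : IntegrableOn f S₁ := hint.integrableOn
  have hintS₂ : IntegrableOn f S₂ := hint.integrableOn
  -- upper bound on S₂
  have hub : ∫ x in S₂, f x ≤ h 1 * m := by
    have : ∫ x in S₂, f x ≤ ∫ _x in S₂, h 1 := by
      apply setIntegral_mono_on hintS₂ ((integrableOn_const_iff).mpr (Or.inr hfinS₂.lt_top)) hmS₂
      intro x hx
      have hx1 : (1:ℝ) ≤ ‖x - a‖ := by
        have : x ∉ Ba := hx.2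
        rw [Metric.mem_ball, dist_eq_norm, not_lt] at this
        exact this
      rcases eq_or_lt_of_le hx1 with he | hlt
      · simp [hf, ← he]
      · exact le_of_lt (hanti (Set.mem_Ici.mpr zero_le_one)
          (Set.mem_Ici.mpr (by linarith)) hlt)
    rw [setIntegral_const, smul_eq_mul, measureReal_def, hmS₂m, mul_comm] at this
    linarith [this]
  -- lower bound on S₁ (strict)
  have hlb : h 1 * m < ∫ x in S₁, f x := by
    have hgtpt : ∀ x ∈ S₁, h 1 < f x := by
      intro x hx
      have hx1 : ‖x - a‖ < 1 := by
        have : x ∈ Ba := hx.1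
        rwa [Metric.mem_ball, dist_eq_norm] at this
      exact hanti (Set.mem_Ici.mpr (norm_nonneg _)) (Set.mem_Ici.mpr zero_le_one) hx1
    have hpos' : 0 < ∫ x in S₁, (f x - h 1) := by
      rw [setIntegral_pos_iff_support_of_nonneg_ae]
      · apply lt_of_lt_of_le hS₁pos
        apply measure_mono
        intro x hx
        refine ⟨?_, hx⟩
        have := hgtpt x hx
        simp only [Function.mem_support]
        intro hc
        rw [sub_eq_zero] at hc
        exact absurd hc.symm (ne_of_lt this)
      · filter_upwards [ae_restrict_mem hmS₁] with x hx
        have := hgtpt x hx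
        show (0:ℝ) ≤ f x - h 1
        linarith
      · exact hintS₁.sub ((integrableOn_const_iff).mpr (Or.inr hfinS₁.lt_top))
    have hsplit : ∫ x in S₁, (f x - h 1) = (∫ x in S₁, f x) - h 1 * m := by
      rw [integral_sub hintS₁ ((integrableOn_const_iff).mpr (Or.inr hfinS₁.lt_top)),
        setIntegral_const, smul_eq_mul, mul_comm, measureReal_def]
    linarith [hsplit ▸ hpos']
  -- decompositions
  have hdecBa : ∫ x in Ba, f x = (∫ x in Ba ∩ Bz, f x) + ∫ x in S₁, f x :=
    (integral_inter_add_diff hmBz hintBa).symm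
  have hdecBz : ∫ x in Bz, f x = (∫ x in Bz ∩ Ba, f x) + ∫ x in S₂, f x :=
    (integral_inter_add_diff hmBa hintBz).symm
  have hcomm : Bz ∩ Ba = Ba ∩ Bz := Set.inter_comm _ _
  rw [hdecBa, hdecBz, hcomm]
  linarith
end
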